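/- In the split-graph construction, if ⟨I_s = I_0, ..., I_{ℓ+1} = I_t⟩ is a reconfiguration sequence with I_s = Y ∪ {z_1}, I_t = {z_2}, and ℓ ≤ k, then D = {v_i ∈ V(G) : x_i ∈ I_j \ I_{j−1} for some j ∈ [ℓ]} is a dominating set of G of size at most ℓ ≤ k. -/

import Mathlib

/-- A set of vertices is independent: no two of its vertices are adjacent. -/
def IsIndep {V : Type*} (G : SimpleGraph V) (I : Set V) : Prop :=
  ∀ ⦃a⦄, a ∈ I → ∀ ⦃b⦄, b ∈ I → ¬ G.Adj a b

/-- Vertex set of the split graph of the reduction: `X = Fin n` (clique vertices `x_i`),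
`Y = Fin n × Fin (k+2)` (independent vertices `y_{i,j}`), and two extra clique vertices
`z₁ = Bool.false`, `z₂ = Bool.true`. -/
abbrev SplitV (n k : ℕ) := Fin n ⊕ ((Fin n × Fin (k + 2)) ⊕ Bool)

/-- The split graph `G'` of the reduction from Dominating Set: `X ∪ {z₁, z₂}` is a clique,
`Y` is independent, and `x_i` is adjacent to every vertex of `Y_j` iff `v_j ∈ N[v_i]`. -/
def splitG {n : ℕ} (G : SimpleGraph (Fin n)) (k : ℕ) : SimpleGraph (SplitV n k) where
  Adj x y :=
    match x, y with
    | .inl i, .inl j => i ≠ j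
    | .inl i, .inr (.inl (j, _)) => j = i ∨ G.Adj i j
    | .inr (.inl (j, _)), .inl i => j = i ∨ G.Adj i j
    | .inl _, .inr (.inr _) => True
    | .inr (.inr _), .inl _ => True
    | .inr (.inr b), .inr (.inr b') => b ≠ b'
    | .inr (.inl _), .inr (.inl _) => False
    | .inr (.inl _), .inr (.inr _) => False
    | .inr (.inr _), .inr (.inl _) => False
  symm := by
    constructor
    rintro (i | ⟨j, m⟩ | b) (i' | ⟨j', m'⟩ | b') h
    · exact h.symm
    · exact h
    · trivial
    · exact h
    · exact h.elim
    · exact h.elim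
    · trivial
    · exact h.elim
    · exact h.symm
  loopless := by
    constructor
    rintro (i | ⟨j, m⟩ | b) h
    · exact h rfl
    · exact h
    · exact h rfl

/-- The independent part `Y` of the split graph. -/
def Yset (n k : ℕ) : Set (SplitV n k) :=
  {x | ∃ p : Fin n × Fin (k + 2), x = Sum.inr (Sum.inl p)}

/-- The vertices `z₁` (for `b = false`) and `z₂` (for `b = true`). -/
def zvert (n k : ℕ) (b : Bool) : SplitV n k := Sum.inr (Sum.inr b)

/-- From any reconfiguration sequence of length `ℓ + 1 ≤ k + 1` from `Y ∪ {z₁}` to `{z₂}`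
in the split graph, the set `D = {v_i : x_i ∈ I_j \ I_{j-1} for some j ∈ [ℓ]}` is a
dominating set of `G` of size at most `ℓ ≤ k`. -/
theorem stmt_16 {n k ℓ : ℕ} (G : SimpleGraph (Fin n)) (hℓk : ℓ ≤ k)
    (seq : ℕ → Set (SplitV n k))
    (h0 : seq 0 = Yset n k ∪ {zvert n k false})
    (hlast : seq (ℓ + 1) = {zvert n k true})
    (hind : ∀ i ≤ ℓ + 1, IsIndep (splitG G k) (seq i))
    (hconn : ∀ i < ℓ + 1,
      ((splitG G k).induce (symmDiff (seq i) (seq (i + 1)))).Connected) :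
    (∀ v : Fin n, ∃ u : Fin n,
        (∃ j : ℕ, 1 ≤ j ∧ j ≤ ℓ ∧ Sum.inl u ∈ seq j \ seq (j - 1)) ∧
        (u = v ∨ G.Adj u v)) ∧
    {v : Fin n | ∃ j : ℕ, 1 ≤ j ∧ j ≤ ℓ ∧ Sum.inl v ∈ seq j \ seq (j - 1)}.ncard ≤ ℓ := by
  classical
  constructor
  · intro v
    set y : Fin (k + 2) → SplitV n k := fun m => Sum.inr (Sum.inl (v, m)) with hy
    have hy0 : ∀ m, y m ∈ seq 0 := by
      intro m; rw [h0]; exact Or.inl ⟨(v, m), rfl⟩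
    have hyl : ∀ m, y m ∉ seq (ℓ + 1) := by
      intro m h
      rw [hlast] at h
      simp only [Set.mem_singleton_iff, zvert, y] at h
      exact Sum.inr_injective.ne (by simp) h
    have hex : ∀ m, ∃ j, y m ∉ seq j := fun m => ⟨ℓ + 1, hyl m⟩
    set J : Fin (k + 2) → ℕ := fun m => Nat.find (hex m) with hJ
    have hJnot : ∀ m, y m ∉ seq (J m) := fun m => Nat.find_spec (hex m)
    have hJle : ∀ m, J m ≤ ℓ + 1 := fun m => Nat.find_le (hyl m)
    have hJ1 : ∀ m, 1 ≤ J m := by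
      intro m
      by_contra h
      have : J m = 0 := by omega
      exact hJnot m (this ▸ hy0 m)
    have hJmem : ∀ m, y m ∈ seq (J m - 1) := by
      intro m
      by_contra h
      exact Nat.find_min (hex m) (show J m - 1 < J m by have := hJ1 m; omega) h
    have hsym : ∀ m, y m ∈ symmDiff (seq (J m - 1)) (seq (J m)) := by
      intro m
      exact Set.mem_symmDiff.mpr (Or.inl ⟨hJmem m, hJnot m⟩)
    by_cases hc : ∃ m, ∃ w ∈ symmDiff (seq (J m - 1)) (seq (J m)), w ≠ y m
    · obtain ⟨m, w, hw, hwne⟩ := hc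
      have hcon := hconn (J m - 1) (by have := hJ1 m; have := hJle m; omega)
      rw [show J m - 1 + 1 = J m by have := hJ1 m; omega] at hcon
      obtain ⟨p⟩ := hcon.preconnected ⟨y m, hsym m⟩ ⟨w, hw⟩
      have hnil : ¬ p.Nil := SimpleGraph.Walk.not_nil_of_ne (by
        intro h; exact hwne (congrArg Subtype.val h).symm)
      have hadj := p.adj_snd hnil
      set w' := p.getVert 1 with hw'
      have hadj2 : (splitG G k).Adj (y m) w'.1 := hadj
      have hwS : w'.1 ∈ symmDiff (seq (J m - 1)) (seq (J m)) := w'.2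
      rcases hwv : w'.1 with u | q | b
      · rw [hwv] at hadj2 hwS
        have huv : u = v ∨ G.Adj u v := by
          rcases (hadj2 : v = u ∨ G.Adj u v) with h | h
          · exact Or.inl h.symm
          · exact Or.inr h
        rcases Set.mem_symmDiff.mp hwS with ⟨h1, h2⟩ | ⟨h1, h2⟩
        · exact absurd ((hadj2 : (splitG G k).Adj (y m) (Sum.inl u)))
            (hind (J m - 1) (by have := hJle m; omega) (hJmem m) h1)
        · have hJl : J m ≤ ℓ := by
            by_contra h
            have : J m = ℓ + 1 := by have := hJle m; omega
            rw [this, hlast] at h1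
            simp [zvert] at h1
          exact ⟨u, ⟨J m, hJ1 m, hJl, ⟨h1, h2⟩⟩, huv⟩
      · rw [hwv] at hadj2
        obtain ⟨a, b⟩ := q
        exact (hadj2 : False).elim
      · rw [hwv] at hadj2
        exact (hadj2 : False).elim
    · push_neg at hc
      exfalso
      have hinj : Function.Injective J := by
        intro a b hab
        have h1 : y a ∈ symmDiff (seq (J b - 1)) (seq (J b)) := hab ▸ hsym a
        have h2 := hc b (y a) h1
        simp only [y, Sum.inr.injEq, Sum.inl.injEq, Prod.mk.injEq] at h2
        exact h2.2
      have hcard := Finset.card_le_card_of_injOn (s := Finset.univ) (t := Finset.Icc 1 (ℓ+1)) J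
        (fun m _ => Finset.mem_Icc.mpr ⟨hJ1 m, hJle m⟩)
        (fun a _ b _ h => hinj h)
      simp only [Finset.card_univ, Fintype.card_fin, Nat.card_Icc] at hcard
      omega
  · set D := {v : Fin n | ∃ j : ℕ, 1 ≤ j ∧ j ≤ ℓ ∧ Sum.inl v ∈ seq j \ seq (j - 1)} with hD
    have h1 : D.ncard ≤ (Set.Icc 1 ℓ).ncard := by
      apply Set.ncard_le_ncard_of_injOn (fun v => if h : v ∈ D then h.choose else 0)
      · intro v hv
        simp only [dif_pos hv]
        exact Set.mem_Icc.mpr ⟨hv.choose_spec.1, hv.choose_spec.2.1⟩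
      · intro a ha b hb hab
        simp only [dif_pos ha, dif_pos hb] at hab
        by_contra hne
        have h1 := ha.choose_spec.2.2.1
        have h2 := hb.choose_spec.2.2.1
        rw [hab] at h1
        exact hind hb.choose (by have := hb.choose_spec.2.1; omega) h1 h2
          (show (splitG G k).Adj (Sum.inl a) (Sum.inl b) from hne)
    have h2 : (Set.Icc 1 ℓ).ncard = ℓ := by
      rw [show (Set.Icc 1 ℓ : Set ℕ) = ↑(Finset.Icc 1 ℓ) by simp, Set.ncard_coe_finset,
        Nat.card_Icc]
      omega
    omega
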